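/- Separation theorem for complete polar cones (specialized to EReal^n): Let W ⊆ (EReal^n)^2 be a complete polar cone and let s, t ∈ EReal^n be such that (s,t) ∉ W. Then there exists x ∈ EReal^n such that g∖x ≤ f∖x for every (f,g) ∈ W, while ¬( t∖x ≤ s∖x ). -/

import Mathlib

open scoped Classical

noncomputable section

/-- Vectors of the semimodule `EReal^n` over the completed max-plus
semiring `EReal = ℝ ∪ {±∞}`. -/
abbrev EVec (n : ℕ) := Fin n → EReal

/-- `W ⊆ (EReal^n)² ≅ EReal^{2n}` is a complete subsemimodule (with the
entrywise operations): it is stable under entrywise max, under the entrywise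
addition of any scalar, and under arbitrary (entrywise) suprema. -/
def IsCompleteSubsemimoduleE {n : ℕ} (W : Set (EVec n × EVec n)) : Prop :=
  (∀ p ∈ W, ∀ q ∈ W, p ⊔ q ∈ W) ∧
  (∀ p ∈ W, ∀ lam : EReal,
    ((fun i => p.1 i + lam, fun i => p.2 i + lam) : EVec n × EVec n) ∈ W) ∧
  (∀ Q : Set (EVec n × EVec n), Q ⊆ W → sSup Q ∈ W)

/-- A complete pre-congruence: a complete subsemimodule of `(EReal^n)²`
containing the diagonal and transitive. -/
def IsCompletePrecongruenceE {n : ℕ} (W : Set (EVec n × EVec n)) : Prop :=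
  IsCompleteSubsemimoduleE W ∧ (∀ f : EVec n, (f, f) ∈ W) ∧
    ∀ f g h : EVec n, (f, g) ∈ W → (g, h) ∈ W → (f, h) ∈ W

/-- A complete polar cone: a complete pre-congruence such that `f ≤ g`
implies `(f,g) ∈ W`. -/
def IsCompletePolarConeE {n : ℕ} (W : Set (EVec n × EVec n)) : Prop :=
  IsCompletePrecongruenceE W ∧ ∀ f g : EVec n, f ≤ g → (f, g) ∈ W

/-- A complete congruence: a symmetric complete pre-congruence. -/
def IsCompleteCongruenceE {n : ℕ} (W : Set (EVec n × EVec n)) : Prop :=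
  IsCompletePrecongruenceE W ∧ ∀ f g : EVec n, (f, g) ∈ W → (g, f) ∈ W

/-- The entrywise supremum `ē(g) = sSup { f | (f,g) ∈ W }`. -/
def ebarE {n : ℕ} (W : Set (EVec n × EVec n)) (g : EVec n) : EVec n :=
  sSup { f : EVec n | (f, g) ∈ W }

/-- The residuation `u∖x = sSup { λ | ∀ i, u_i + λ ≤ x_i }` in `EReal`. -/
def eresE {n : ℕ} (u x : EVec n) : EReal :=
  sSup { lam : EReal | ∀ i, u i + lam ≤ x i }


lemma ereal_add_sSup_le {u x : EReal} {S : Set EReal}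
    (h : ∀ lam ∈ S, u + lam ≤ x) : u + sSup S ≤ x := by
  induction u with
  | bot => simp [EReal.bot_add]
  | coe u =>
    have key : ∀ lam : EReal, (u : EReal) + lam ≤ x ↔ lam ≤ x - u := by
      intro lam
      rw [add_comm, EReal.le_sub_iff_add_le (Or.inl (EReal.coe_ne_bot u))
        (Or.inl (EReal.coe_ne_top u))]
    rw [key]
    exact sSup_le fun l hl => (key l).mp (h l hl)
  | top =>
    rcases eq_or_ne (sSup S) ⊥ with hb | hb
    · simp [hb, EReal.add_bot]
    · obtain ⟨lam, hl, hlb⟩ : ∃ lam ∈ S, lam ≠ ⊥ := by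
        by_contra hc
        push_neg at hc
        exact hb (le_bot_iff.mp (sSup_le fun l hl => le_of_eq (hc l hl)))
      have h2 := h lam hl
      rw [EReal.top_add_of_ne_bot hlb] at h2
      exact le_trans le_top h2

lemma eresE_spec {n : ℕ} (u x : EVec n) (i : Fin n) : u i + eresE u x ≤ x i :=
  ereal_add_sSup_le (fun lam hl => hl i)

/-- **Separation theorem for complete polar cones** (Theorem 3.3 of the paper,
specialized to `X = EReal^n`): if `W` is a complete polar cone and
`(s,t) ∉ W`, then there is `x` with `g∖x ≤ f∖x` for all `(f,g) ∈ W`, while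
`¬(t∖x ≤ s∖x)`. -/
theorem separation_complete_polar_cone (n : ℕ) (W : Set (EVec n × EVec n))
    (hW : IsCompletePolarConeE W) (s t : EVec n) (hst : (s, t) ∉ W) :
    ∃ x : EVec n,
      (∀ p ∈ W, eresE p.2 x ≤ eresE p.1 x) ∧
      ¬ eresE t x ≤ eresE s x := by
  obtain ⟨⟨⟨hmax, hscal, hsSup⟩, hdiag, htrans⟩, hcone⟩ := hW
  set x := ebarE W t with hxdef
  have hxt : (x, t) ∈ W := by
    have h1 : sSup {p : EVec n × EVec n | p.2 = t ∧ p ∈ W} = (x, t) := by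
      apply Prod.ext
      · rw [Prod.fst_sSup]
        show sSup _ = sSup _
        congr 1
        ext f
        constructor
        · rintro ⟨p, ⟨h2, hpW⟩, rfl⟩
          show (p.1, t) ∈ W
          rwa [← h2, Prod.mk.eta]
        · intro hf
          exact ⟨(f, t), ⟨rfl, hf⟩, rfl⟩
      · rw [Prod.snd_sSup]
        have h3 : Prod.snd '' {p : EVec n × EVec n | p.2 = t ∧ p ∈ W} = {t} := by
          apply Set.eq_singleton_iff_unique_mem.mpr
          refine ⟨⟨(t, t), ⟨rfl, hdiag t⟩, rfl⟩, ?_⟩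
          rintro g ⟨p, ⟨h2, _⟩, rfl⟩
          exact h2
        rw [h3, sSup_singleton]
    rw [← h1]
    exact hsSup _ (fun p hp => hp.2)
  have htx : t ≤ x := le_sSup (hdiag t)
  refine ⟨x, ?_, ?_⟩
  · rintro ⟨f, g⟩ hfg
    apply sSup_le_sSup
    intro lam hlam
    intro i
    have h1 : ((fun i => f i + lam, fun i => g i + lam) : EVec n × EVec n) ∈ W :=
      hscal _ hfg lam
    have h2 : ((fun i => g i + lam : EVec n), x) ∈ W := hcone _ _ hlam
    have h3 : ((fun i => f i + lam : EVec n), t) ∈ W :=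
      htrans _ _ _ (htrans _ _ _ h1 h2) hxt
    exact le_sSup (s := {f : EVec n | (f, t) ∈ W}) h3 i
  · intro hle
    have h0 : (0 : EReal) ≤ eresE t x := by
      apply le_sSup
      intro i
      rw [add_zero]
      exact htx i
    have hsx : s ≤ x := by
      intro i
      calc s i = s i + 0 := (add_zero _).symm
      _ ≤ s i + eresE s x := add_le_add_right (h0.trans hle) _
      _ ≤ x i := eresE_spec s x i
    exact hst (htrans _ _ _ (hcone _ _ hsx) hxt)
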